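/- arXiv:1505.05391 — 2 statements merged into one kernel-verified Lean document; each statement's English description precedes it below -/
import Mathlib

section
/- Variance reduction of deterministic mixture weights (Theorem 1): With x_i ~ q_i independent, the variance of the full DM-MIS estimator Î_DM = (1/N) ∑_i f(x_i)π(x_i)/ψ(x_i), with ψ = (1/N)∑_j q_j, is less than or equal to the variance of the standard MIS estimator Î_MIS = (1/N) ∑_i f(x_i)π(x_i)/q_i(x_i). -/
open MeasureTheory ProbabilityTheory
open scoped NNReal ENNReal

/-- Theorem 1: the full DM-MIS estimator has variance no larger than
the standard MIS estimator. -/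
theorem full_DM_variance_le_standard_MIS_variance
    {n N : ℕ} (hN : 0 < N)
    (tgt : (Fin n → ℝ) → ℝ) (f : (Fin n → ℝ) → ℝ)
    (htgt_nonneg : ∀ x, 0 ≤ tgt x) (htgt_int : Integrable tgt)
    (hf_meas : Measurable f)
    (q : Fin N → (Fin n → ℝ) → ℝ)
    (hq_meas : ∀ i, Measurable (q i)) (hq_nonneg : ∀ i x, 0 ≤ q i x)
    (hq_dens : ∀ i, ∫ x, q i x = 1)
    (hpos : ∀ i x, f x * tgt x ≠ 0 → 0 < q i x)
    (ψ : (Fin n → ℝ) → ℝ)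
    (hψ : ∀ x, ψ x = (1 / (N : ℝ)) * ∑ j, q j x)
    {Ω : Type*} [MeasureSpace Ω] [IsProbabilityMeasure (ℙ : Measure Ω)]
    (X : Fin N → Ω → (Fin n → ℝ)) (hX : ∀ i, Measurable (X i))
    (hindep : iIndepFun X ℙ)
    (hdist : ∀ i, Measure.map (X i) ℙ
      = volume.withDensity (fun x => ENNReal.ofReal (q i x)))
    (hL2_MIS : ∀ i, MemLp (fun ω => f (X i ω) * tgt (X i ω) / q i (X i ω)) 2 ℙ)
    (hL2_DM : ∀ i, MemLp (fun ω => f (X i ω) * tgt (X i ω) / ψ (X i ω)) 2 ℙ) :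
    variance (fun ω => (1 / (N : ℝ)) * ∑ i, f (X i ω) * tgt (X i ω) / ψ (X i ω)) ℙ
      ≤ variance (fun ω => (1 / (N : ℝ)) * ∑ i, f (X i ω) * tgt (X i ω) / q i (X i ω)) ℙ := by
  classical
  have hNR : (0:ℝ) < (N:ℝ) := by exact_mod_cast hN
  have hNne : (N:ℝ) ≠ 0 := hNR.ne'
  -- measurable representative of tgt
  set T : (Fin n → ℝ) → ℝ := htgt_int.1.mk tgt with hT_def
  have hT_meas : Measurable T := htgt_int.1.stronglyMeasurable_mk.measurable
  have hT_ae : tgt =ᵐ[(volume : Measure (Fin n → ℝ))] T := htgt_int.1.ae_eq_mk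
  set F : (Fin n → ℝ) → ℝ := fun x => f x * T x with hF_def
  have hF_meas : Measurable F := hf_meas.mul hT_meas
  have hψ_eq : ψ = fun x => (1 / (N:ℝ)) * ∑ j, q j x := funext hψ
  have hψ_meas : Measurable ψ := by
    rw [hψ_eq]; exact (Finset.measurable_sum _ fun j _ => hq_meas j).const_mul _
  set H : (Fin n → ℝ) → ℝ := fun x => F x / ψ x with hH_def
  set G : Fin N → (Fin n → ℝ) → ℝ := fun i x => F x / q i x with hG_def
  have hH_meas : Measurable H := hF_meas.div hψ_meas
  have hG_meas : ∀ i, Measurable (G i) := fun i => hF_meas.div (hq_meas i)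
  have hsumq : ∀ x, ∑ j, q j x = (N:ℝ) * ψ x := by
    intro x; rw [hψ x]; field_simp
  -- a.e. composition equalities
  have hmap_ac : ∀ i, (Measure.map (X i) ℙ) ≪ (volume : Measure (Fin n → ℝ)) := by
    intro i; rw [hdist i]; exact withDensity_absolutelyContinuous _ _
  have hcompT : ∀ i, (fun ω => tgt (X i ω)) =ᵐ[ℙ] fun ω => T (X i ω) := fun i =>
    ae_eq_comp' (hX i).aemeasurable hT_ae (hmap_ac i)
  have hDM_ae : ∀ i, (fun ω => f (X i ω) * tgt (X i ω) / ψ (X i ω))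
      =ᵐ[ℙ] (fun ω => H (X i ω)) := by
    intro i; filter_upwards [hcompT i] with ω hω; simp only [hH_def, hF_def, hω]
  have hMIS_ae : ∀ i, (fun ω => f (X i ω) * tgt (X i ω) / q i (X i ω))
      =ᵐ[ℙ] (fun ω => G i (X i ω)) := by
    intro i; filter_upwards [hcompT i] with ω hω; simp only [hG_def, hF_def, hω]
  have hL2H : ∀ i, MemLp (fun ω => H (X i ω)) 2 ℙ := fun i => (hL2_DM i).ae_eq (hDM_ae i)
  have hL2G : ∀ i, MemLp (fun ω => G i (X i ω)) 2 ℙ := fun i => (hL2_MIS i).ae_eq (hMIS_ae i)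
  -- expectation transfer
  have hexp : ∀ (i : Fin N) (φ : (Fin n → ℝ) → ℝ), Measurable φ →
      ∫ ω, φ (X i ω) ∂ℙ = ∫ x, q i x * φ x := by
    intro i φ hφ
    have h1 : ∫ ω, φ (X i ω) ∂ℙ = ∫ x, φ x ∂(Measure.map (X i) ℙ) :=
      (integral_map (hX i).aemeasurable hφ.aestronglyMeasurable).symm
    rw [h1, hdist i]
    rw [show (fun x => ENNReal.ofReal (q i x))
        = fun x => ((Real.toNNReal (q i x) : ℝ≥0) : ℝ≥0∞) from rfl,
      integral_withDensity_eq_integral_smul ((hq_meas i).real_toNNReal) φ]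
    congr 1; funext x
    simp [NNReal.smul_def, Real.coe_toNNReal _ (hq_nonneg i x)]
  -- integrability transfer
  have hint : ∀ (i : Fin N) (φ : (Fin n → ℝ) → ℝ), Measurable φ →
      Integrable (fun ω => φ (X i ω)) ℙ →
      Integrable (fun x => q i x * φ x) (volume : Measure (Fin n → ℝ)) := by
    intro i φ hφ hi
    have h1 : Integrable φ (Measure.map (X i) ℙ) :=
      (integrable_map_measure hφ.aestronglyMeasurable (hX i).aemeasurable).mpr hi
    rw [hdist i] at h1
    rw [show (fun x => ENNReal.ofReal (q i x))
        = fun x => ((Real.toNNReal (q i x) : ℝ≥0) : ℝ≥0∞) from rfl] at h1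
    have h2 := (integrable_withDensity_iff_integrable_smul
      ((hq_meas i).real_toNNReal) (g := φ)).mp h1
    refine h2.congr (Filter.Eventually.of_forall fun x => ?_)
    simp [NNReal.smul_def, Real.coe_toNNReal _ (hq_nonneg i x)]
  have hint_a : ∀ i, Integrable (fun x => q i x * H x) (volume : Measure (Fin n → ℝ)) :=
    fun i => hint i H hH_meas ((hL2H i).integrable one_le_two)
  have hint_b : ∀ i, Integrable (fun x => q i x * (H x)^2) (volume : Measure (Fin n → ℝ)) :=
    fun i => hint i (fun x => (H x)^2) (hH_meas.pow_const 2) (hL2H i).integrable_sq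
  have hint_d : ∀ i, Integrable (fun x => q i x * (G i x)^2) (volume : Measure (Fin n → ℝ)) :=
    fun i => hint i (fun x => (G i x)^2) ((hG_meas i).pow_const 2) (hL2G i).integrable_sq
  set a : Fin N → ℝ := fun i => ∫ x, q i x * H x with ha_def
  set b : Fin N → ℝ := fun i => ∫ x, q i x * (H x)^2 with hb_def
  set c : Fin N → ℝ := fun i => ∫ x, q i x * G i x with hc_def
  set d : Fin N → ℝ := fun i => ∫ x, q i x * (G i x)^2 with hd_def
  set I0 : ℝ := ∫ x, F x with hI0_def
  set J : ℝ := ∫ x, ψ x * (H x)^2 with hJ_def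
  -- per-term variances
  have hvarDM : ∀ i, variance (fun ω => f (X i ω) * tgt (X i ω) / ψ (X i ω)) ℙ
      = b i - (a i)^2 := by
    intro i
    rw [variance_eq_sub (hL2_DM i)]
    have h1 : ∫ ω, (f (X i ω) * tgt (X i ω) / ψ (X i ω)) ∂ℙ = a i := by
      rw [integral_congr_ae (hDM_ae i), hexp i H hH_meas]
    have h2 : ∫ ω, ((fun ω => f (X i ω) * tgt (X i ω) / ψ (X i ω))^2) ω ∂ℙ = b i := by
      have he : ((fun ω => f (X i ω) * tgt (X i ω) / ψ (X i ω))^2 : Ω → ℝ)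
          =ᵐ[ℙ] fun ω => (H (X i ω))^2 := by
        filter_upwards [hDM_ae i] with ω h
        simp only [Pi.pow_apply]; rw [h]
      rw [integral_congr_ae he, hexp i (fun x => (H x)^2) (hH_meas.pow_const 2)]
    rw [h2, h1]
  have hvarMIS : ∀ i, variance (fun ω => f (X i ω) * tgt (X i ω) / q i (X i ω)) ℙ
      = d i - (c i)^2 := by
    intro i
    rw [variance_eq_sub (hL2_MIS i)]
    have h1 : ∫ ω, (f (X i ω) * tgt (X i ω) / q i (X i ω)) ∂ℙ = c i := by
      rw [integral_congr_ae (hMIS_ae i), hexp i (G i) (hG_meas i)]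
    have h2 : ∫ ω, ((fun ω => f (X i ω) * tgt (X i ω) / q i (X i ω))^2) ω ∂ℙ = d i := by
      have he : ((fun ω => f (X i ω) * tgt (X i ω) / q i (X i ω))^2 : Ω → ℝ)
          =ᵐ[ℙ] fun ω => (G i (X i ω))^2 := by
        filter_upwards [hMIS_ae i] with ω h
        simp only [Pi.pow_apply]; rw [h]
      rw [integral_congr_ae he, hexp i (fun x => (G i x)^2) ((hG_meas i).pow_const 2)]
    rw [h2, h1]
  -- variance of sums via independence
  have hLHS : variance (fun ω => (1 / (N : ℝ)) * ∑ i, f (X i ω) * tgt (X i ω) / ψ (X i ω)) ℙ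
      = (1/(N:ℝ))^2 * ∑ i, (b i - (a i)^2) := by
    rw [variance_const_mul]
    congr 1
    have heq : (fun ω => ∑ i, f (X i ω) * tgt (X i ω) / ψ (X i ω))
        = ∑ i : Fin N, fun ω => f (X i ω) * tgt (X i ω) / ψ (X i ω) := by
      funext ω; simp [Finset.sum_apply]
    rw [heq, IndepFun.variance_sum (fun i _ => hL2_DM i) ?_]
    · exact Finset.sum_congr rfl fun i _ => hvarDM i
    · intro i _ j _ hij
      have h0 : IndepFun (fun ω => H (X i ω)) (fun ω => H (X j ω)) ℙ :=
        (hindep.indepFun hij).comp hH_meas hH_meas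
      exact h0.congr (hDM_ae i).symm (hDM_ae j).symm
  have hRHS : variance (fun ω => (1 / (N : ℝ)) * ∑ i, f (X i ω) * tgt (X i ω) / q i (X i ω)) ℙ
      = (1/(N:ℝ))^2 * ∑ i, (d i - (c i)^2) := by
    rw [variance_const_mul]
    congr 1
    have heq : (fun ω => ∑ i, f (X i ω) * tgt (X i ω) / q i (X i ω))
        = ∑ i : Fin N, fun ω => f (X i ω) * tgt (X i ω) / q i (X i ω) := by
      funext ω; simp [Finset.sum_apply]
    rw [heq, IndepFun.variance_sum (fun i _ => hL2_MIS i) ?_]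
    · exact Finset.sum_congr rfl fun i _ => hvarMIS i
    · intro i _ j _ hij
      have h0 : IndepFun (fun ω => G i (X i ω)) (fun ω => G j (X j ω)) ℙ :=
        (hindep.indepFun hij).comp (hG_meas i) (hG_meas j)
      exact h0.congr (hMIS_ae i).symm (hMIS_ae j).symm
  -- identity (1): c i = I0
  have hc : ∀ i, c i = I0 := by
    intro i
    apply integral_congr_ae
    filter_upwards [hT_ae] with x hx
    by_cases hq : q i x = 0
    · have hF0 : F x = 0 := by
        by_contra hF
        have hfx : f x * tgt x ≠ 0 := by rw [hx]; exact hF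
        exact (hpos i x hfx).ne' hq
      simp [hG_def, hF0, hq]
    · show q i x * (F x / q i x) = F x
      rw [mul_comm, div_mul_cancel₀ _ hq]
  -- identity (2): ∑ a = N * I0
  have hsum_a : ∑ i, a i = (N:ℝ) * I0 := by
    rw [ha_def, ← integral_finset_sum _ (fun i _ => hint_a i),
      show (N:ℝ) * I0 = ∫ x, (N:ℝ) * F x from (integral_const_mul _ _).symm]
    apply integral_congr_ae
    filter_upwards [hT_ae] with x hx
    by_cases hψ0 : ψ x = 0
    · have hF0 : F x = 0 := by
        by_contra hF
        have hfx : f x * tgt x ≠ 0 := by rw [hx]; exact hF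
        have : (0:ℝ) < ψ x := by
          rw [hψ x]
          have h1 : (0:ℝ) < ∑ j, q j x :=
            Finset.sum_pos (fun j _ => hpos j x hfx) ⟨⟨0, hN⟩, Finset.mem_univ _⟩
          positivity
        exact this.ne' hψ0
      simp [hH_def, hψ0, hF0]
    · show ∑ i, q i x * H x = (N:ℝ) * F x
      rw [← Finset.sum_mul, hsumq x, hH_def]
      field_simp
  -- identity (3): ∑ b = N * J
  have hsum_b : ∑ i, b i = (N:ℝ) * J := by
    rw [hb_def, ← integral_finset_sum _ (fun i _ => hint_b i),
      show (N:ℝ) * J = ∫ x, (N:ℝ) * (ψ x * (H x)^2) from (integral_const_mul _ _).symm]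
    apply integral_congr_ae
    apply Filter.Eventually.of_forall
    intro x
    show ∑ i, q i x * (H x)^2 = (N:ℝ) * (ψ x * (H x)^2)
    rw [show ∑ i, q i x * (H x)^2 = (∑ i, q i x) * (H x)^2 from (Finset.sum_mul ..).symm,
      hsumq x]
    ring
  -- integrability of fun x => N * (ψ x * H x ^ 2)
  have hintL : Integrable (fun x => (N:ℝ) * (ψ x * (H x)^2)) (volume : Measure (Fin n → ℝ)) := by
    have h0 : Integrable (fun x => ∑ i, q i x * (H x)^2) (volume : Measure (Fin n → ℝ)) :=
      integrable_finset_sum _ (fun i _ => hint_b i)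
    refine h0.congr (Filter.Eventually.of_forall fun x => ?_)
    show ∑ i, q i x * (H x)^2 = (N:ℝ) * (ψ x * (H x)^2)
    rw [show ∑ i, q i x * (H x)^2 = (∑ i, q i x) * (H x)^2 from (Finset.sum_mul ..).symm,
      hsumq x]
    ring
  -- inequality (4): N * J ≤ ∑ d
  have hkey : (N:ℝ) * J ≤ ∑ i, d i := by
    rw [show (N:ℝ) * J = ∫ x, (N:ℝ) * (ψ x * (H x)^2) from (integral_const_mul _ _).symm,
      hd_def, ← integral_finset_sum _ (fun i _ => hint_d i)]
    apply integral_mono_ae hintL (integrable_finset_sum _ (fun i _ => hint_d i))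
    filter_upwards [hT_ae] with x hx
    by_cases hF0 : F x = 0
    · simp [hH_def, hG_def, hF0, zero_div]
    · have hfx : f x * tgt x ≠ 0 := by rw [hx]; exact hF0
      have hqpos : ∀ i, 0 < q i x := fun i => hpos i x hfx
      have hsq : (0:ℝ) < ∑ j, q j x :=
        Finset.sum_pos (fun j _ => hqpos j) ⟨⟨0, hN⟩, Finset.mem_univ _⟩
      have hψpos : 0 < ψ x := by rw [hψ x]; positivity
      have hCS := Finset.sq_sum_div_le_sum_sq_div Finset.univ (fun _ : Fin N => F x)
        (g := fun j => q j x) (fun j _ => hqpos j)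
      have hsumF : ∑ _j : Fin N, F x = (N:ℝ) * F x := by
        simp [Finset.sum_const, mul_comm]
      rw [hsumF] at hCS
      calc (N:ℝ) * (ψ x * (H x)^2) = ((N:ℝ) * F x)^2 / (∑ j, q j x) := by
            rw [hH_def, hsumq x]
            field_simp
        _ ≤ ∑ i, (F x)^2 / q i x := hCS
        _ = ∑ i, q i x * (G i x)^2 := by
            apply Finset.sum_congr rfl
            intro i _
            rw [hG_def]
            field_simp [(hqpos i).ne']
  -- inequality (5): N * I0^2 ≤ ∑ a^2
  have h5 : (N:ℝ) * I0^2 ≤ ∑ i, (a i)^2 := by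
    have hCS := sq_sum_le_card_mul_sum_sq (s := Finset.univ) (f := a)
    rw [hsum_a] at hCS
    simp only [Finset.card_univ, Fintype.card_fin] at hCS
    nlinarith [hCS, hNR]
  -- conclude
  rw [hLHS, hRHS]
  apply mul_le_mul_of_nonneg_left _ (by positivity)
  rw [Finset.sum_sub_distrib, Finset.sum_sub_distrib]
  have hcsum : ∑ i, (c i)^2 = (N:ℝ) * I0^2 := by
    simp [hc, Finset.sum_const, mul_comm]
  have hbd : ∑ i, b i ≤ ∑ i, d i := by rw [hsum_b]; exact hkey
  rw [hcsum]
  linarith [h5, hbd]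
end

section
/- Partial DM unbiasedness: Given a partition S_1, ..., S_P of {1,...,N} and independent samples x_i ~ q_i, the partial DM-MIS estimator Î = (1/N) ∑_{p=1}^P ∑_{i ∈ S_p} f(x_i) π(x_i)/ψ_p(x_i), where ψ_p(x) = (1/|S_p|) ∑_{j ∈ S_p} q_j(x), satisfies E[Î] = ∫ f(x) π(x) dx. -/
open MeasureTheory ProbabilityTheory

/-- unbiasedness of the partial DM-MIS estimator. -/
theorem partial_DM_MIS_unbiased
    {n N P : ℕ} (hN : 0 < N) (hP : 0 < P)
    (tgt : (Fin n → ℝ) → ℝ) (f : (Fin n → ℝ) → ℝ)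
    (htgt_nonneg : ∀ x, 0 ≤ tgt x) (htgt_int : Integrable tgt)
    (hf_meas : Measurable f) (hftgt_int : Integrable (fun x => f x * tgt x))
    (q : Fin N → (Fin n → ℝ) → ℝ)
    (hq_meas : ∀ i, Measurable (q i)) (hq_nonneg : ∀ i x, 0 ≤ q i x)
    (hq_dens : ∀ i, ∫ x, q i x = 1)
    (S : Fin P → Finset (Fin N))
    (hS_nonempty : ∀ p, (S p).Nonempty)
    (hS_disjoint : ∀ p p', p ≠ p' → Disjoint (S p) (S p'))
    (hS_cover : ∀ i, ∃ p, i ∈ S p)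
    (ψ : Fin P → (Fin n → ℝ) → ℝ)
    (hψ : ∀ p x, ψ p x = (1 / ((S p).card : ℝ)) * ∑ j ∈ S p, q j x)
    (hpos : ∀ p x, f x * tgt x ≠ 0 → 0 < ψ p x)
    {Ω : Type*} [MeasureSpace Ω] [IsProbabilityMeasure (ℙ : Measure Ω)]
    (X : Fin N → Ω → (Fin n → ℝ)) (hX : ∀ i, Measurable (X i))
    (hindep : iIndepFun X ℙ)
    (hdist : ∀ i, Measure.map (X i) ℙ
      = volume.withDensity (fun x => ENNReal.ofReal (q i x))) :
    ∫ ω, (1 / (N : ℝ)) * ∑ p, ∑ i ∈ S p, f (X i ω) * tgt (X i ω) / ψ p (X i ω) ∂ℙ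
      = ∫ x, f x * tgt x := by
  set g : (Fin n → ℝ) → ℝ := fun x => f x * tgt x with hgdef
  have hg_aesm : AEStronglyMeasurable g volume := hftgt_int.aestronglyMeasurable
  have hψ_meas : ∀ p, Measurable (ψ p) := by
    intro p
    have : ψ p = fun x => (1 / ((S p).card : ℝ)) * ∑ j ∈ S p, q j x := funext (hψ p)
    rw [this]
    exact measurable_const.mul (Finset.measurable_sum _ fun j _ => hq_meas j)
  have hh_aesm : ∀ p, AEStronglyMeasurable (fun x => g x / ψ p x) volume := by
    intro p
    simp_rw [div_eq_mul_inv]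
    exact hg_aesm.mul (hψ_meas p).inv.aestronglyMeasurable
  have hcardpos : ∀ p, (0:ℝ) < (S p).card := by
    intro p
    exact_mod_cast Finset.card_pos.mpr (hS_nonempty p)
  -- pointwise sum identity
  have hsum_pt : ∀ p x, ∑ i ∈ S p, q i x * (g x / ψ p x) = ((S p).card : ℝ) * g x := by
    intro p x
    by_cases h0 : g x = 0
    · simp [h0]
    · have hψpos := hpos p x h0
      have hsum : ∑ j ∈ S p, q j x = ((S p).card : ℝ) * ψ p x := by
        rw [hψ p x]
        field_simp
      rw [← Finset.sum_mul, hsum]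
      rw [mul_assoc, mul_div_cancel₀ (g x) hψpos.ne']
  -- pointwise bound
  have hbound : ∀ p, ∀ i ∈ S p, ∀ x,
      ‖q i x * (g x / ψ p x)‖ ≤ ‖((S p).card : ℝ) * g x‖ := by
    intro p i hi x
    by_cases h0 : g x = 0
    · simp [h0]
    · have hψpos := hpos p x h0
      have hsum : ∑ j ∈ S p, q j x = ((S p).card : ℝ) * ψ p x := by
        rw [hψ p x]; field_simp
      have hle : q i x ≤ ((S p).card : ℝ) * ψ p x := by
        rw [← hsum]
        exact Finset.single_le_sum (fun j _ => hq_nonneg j x) hi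
      have h1 : q i x / ψ p x ≤ ((S p).card : ℝ) := by
        rw [div_le_iff₀ hψpos]; exact hle
      calc ‖q i x * (g x / ψ p x)‖ = q i x / ψ p x * |g x| := by
            rw [Real.norm_eq_abs, abs_mul, abs_div, abs_of_nonneg (hq_nonneg i x),
              abs_of_pos hψpos]
            ring
        _ ≤ ((S p).card : ℝ) * |g x| := mul_le_mul_of_nonneg_right h1 (abs_nonneg _)
        _ = ‖((S p).card : ℝ) * g x‖ := by
            rw [Real.norm_eq_abs, abs_mul ((S p).card : ℝ) (g x),
              abs_of_nonneg (hcardpos p).le]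
  -- x-side integrability
  have hint_x : ∀ p, ∀ i ∈ S p, Integrable (fun x => q i x * (g x / ψ p x)) := by
    intro p i hi
    exact (hftgt_int.const_mul ((S p).card : ℝ)).mono
      ((hq_meas i).aestronglyMeasurable.mul (hh_aesm p))
      (Filter.Eventually.of_forall (hbound p i hi))
  -- per-term ω-side facts
  have key : ∀ p, ∀ i ∈ S p,
      Integrable (fun ω => g (X i ω) / ψ p (X i ω)) ℙ ∧
      ∫ ω, g (X i ω) / ψ p (X i ω) ∂ℙ = ∫ x, q i x * (g x / ψ p x) := by
    intro p i hi
    have hac : Measure.map (X i) ℙ ≪ volume := by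
      rw [hdist i]; exact withDensity_absolutelyContinuous _ _
    have hmeas : AEStronglyMeasurable (fun x => g x / ψ p x) (Measure.map (X i) ℙ) :=
      (hh_aesm p).mono_ac hac
    have hdens : (fun x => ENNReal.ofReal (q i x))
        = fun x => ((Real.toNNReal (q i x) : NNReal) : ENNReal) := rfl
    have htoNN : Measurable fun x => Real.toNNReal (q i x) :=
      (hq_meas i).real_toNNReal
    have hsmul : ∀ x, Real.toNNReal (q i x) • (g x / ψ p x) = q i x * (g x / ψ p x) := by
      intro x
      rw [NNReal.smul_def, Real.coe_toNNReal _ (hq_nonneg i x), smul_eq_mul]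
    have hint_map : Integrable (fun x => g x / ψ p x) (Measure.map (X i) ℙ) := by
      rw [hdist i, hdens, integrable_withDensity_iff_integrable_smul htoNN]
      exact (hint_x p i hi).congr (Filter.Eventually.of_forall fun x => (hsmul x).symm)
    constructor
    · exact (integrable_map_measure hmeas (hX i).aemeasurable).mp hint_map
    · rw [← integral_map (hX i).aemeasurable hmeas, hdist i, hdens,
        integral_withDensity_eq_integral_smul htoNN]
      exact integral_congr_ae (Filter.Eventually.of_forall hsmul)
  -- sum of cards
  have hcards : ∑ p, ((S p).card : ℝ) = (N : ℝ) := by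
    have huniv : (Finset.univ : Finset (Fin N)) = Finset.univ.biUnion S := by
      ext i
      simp only [Finset.mem_biUnion, Finset.mem_univ, true_and]
      exact iff_of_true trivial (hS_cover i)
    have hN' : ∑ p, (S p).card = (Finset.univ : Finset (Fin N)).card := by
      rw [huniv]
      exact (Finset.card_biUnion fun p _ p' _ h => hS_disjoint p p' h).symm
    rw [Finset.card_univ, Fintype.card_fin] at hN'
    exact_mod_cast hN'
  -- final computation
  rw [integral_const_mul]
  have hinner : ∀ ω, ∀ p, ∑ i ∈ S p, f (X i ω) * tgt (X i ω) / ψ p (X i ω)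
      = ∑ i ∈ S p, g (X i ω) / ψ p (X i ω) := fun ω p => rfl
  have step1 : ∫ ω, ∑ p, ∑ i ∈ S p, f (X i ω) * tgt (X i ω) / ψ p (X i ω) ∂ℙ
      = ∑ p, ∑ i ∈ S p, ∫ ω, g (X i ω) / ψ p (X i ω) ∂ℙ := by
    rw [integral_finset_sum]
    · exact Finset.sum_congr rfl fun p _ => integral_finset_sum _ fun i hi => (key p i hi).1
    · exact fun p _ => integrable_finset_sum _ fun i hi => (key p i hi).1
  rw [step1]
  have step2 : ∀ p, ∑ i ∈ S p, ∫ ω, g (X i ω) / ψ p (X i ω) ∂ℙ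
      = ((S p).card : ℝ) * ∫ x, g x := by
    intro p
    have : ∑ i ∈ S p, ∫ ω, g (X i ω) / ψ p (X i ω) ∂ℙ
        = ∫ x, ∑ i ∈ S p, q i x * (g x / ψ p x) := by
      rw [integral_finset_sum _ fun i hi => hint_x p i hi]
      exact Finset.sum_congr rfl fun i hi => (key p i hi).2
    rw [this]
    calc ∫ x, ∑ i ∈ S p, q i x * (g x / ψ p x)
        = ∫ x, ((S p).card : ℝ) * g x := integral_congr_ae
          (Filter.Eventually.of_forall fun x => hsum_pt p x)
      _ = ((S p).card : ℝ) * ∫ x, g x := integral_const_mul _ _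
  simp_rw [step2]
  rw [← Finset.sum_mul, hcards]
  have hNne : (N : ℝ) ≠ 0 := by positivity
  field_simp
end
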